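/- arXiv:1812.03195 — 5 statements merged into one kernel-verified Lean document; each statement's English description precedes it below -/
import Mathlib

section
/- Every claw-free finite simple graph has bipartite pathwidth at most 2; that is, for every vertex subset S of a claw-free graph G such that the induced subgraph G[S] is bipartite, pw(G[S]) ≤ 2. -/
open SimpleGraph

/-- A path decomposition of a simple graph `G`: a nonempty finite sequence of bags
covering all vertices and edges, such that each vertex occurs in an interval of bags. -/
structure PathDecomp {V : Type*} (G : SimpleGraph V) where
  len : ℕ
  len_pos : 0 < len
  bags : Fin len → Finset V
  mem_bag : ∀ v : V, ∃ i, v ∈ bags i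
  edge_bag : ∀ ⦃u v : V⦄, G.Adj u v → ∃ i, u ∈ bags i ∧ v ∈ bags i
  interval : ∀ (v : V) (i j k : Fin len), i ≤ j → j ≤ k →
    v ∈ bags i → v ∈ bags k → v ∈ bags j

/-- The width of a path decomposition: maximum bag size minus one. -/
def PathDecomp.width {V : Type*} {G : SimpleGraph V} (D : PathDecomp G) : ℕ :=
  (Finset.univ.sup fun i => (D.bags i).card) - 1

/-- The pathwidth of a graph: minimum width over all path decompositions. -/
noncomputable def pathwidth {V : Type*} (G : SimpleGraph V) : ℕ :=
  sInf {w : ℕ | ∃ D : PathDecomp G, D.width = w}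

/-- A set of vertices is independent if no two of its members are adjacent. -/
def IndepVertexSet {V : Type*} (G : SimpleGraph V) (A : Set V) : Prop :=
  ∀ ⦃u⦄, u ∈ A → ∀ ⦃v⦄, v ∈ A → ¬ G.Adj u v

/-- A graph is bipartite if its vertex set is partitioned into two independent sets. -/
def IsBipartiteGraph {V : Type*} (G : SimpleGraph V) : Prop :=
  ∃ A B : Set V, A ∪ B = Set.univ ∧ Disjoint A B ∧
    IndepVertexSet G A ∧ IndepVertexSet G B

/-- `G` contains an induced subgraph isomorphic to `H`. -/
def HasInducedCopy {V W : Type*} (G : SimpleGraph V) (H : SimpleGraph W) : Prop :=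
  ∃ S : Set V, Nonempty (G.induce S ≃g H)

/-- The claw `K_{1,3}`. -/
def claw : SimpleGraph (Fin 1 ⊕ Fin 3) := completeBipartiteGraph (Fin 1) (Fin 3)

section Aux

open Finset

variable {W : Type*} [Fintype W] (H : SimpleGraph W)

open scoped Classical in
noncomputable def crossSet (A : Finset W) : Finset (W × W) :=
  Finset.univ.filter (fun p => H.Adj p.1 p.2 ∧ p.1 ∈ A ∧ p.2 ∉ A)

open scoped Classical in
lemma cross_step (hdeg : ∀ v, (H.neighborFinset v).card ≤ 2) (A : Finset W)
    (hA : (crossSet H A).card ≤ 2) (hne : A ≠ Finset.univ) :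
    ∃ x, x ∉ A ∧ (crossSet H (insert x A)).card ≤ 2 := by
  -- generic bound for any x ∉ A
  have key : ∀ x, x ∉ A →
      (crossSet H (insert x A)).card ≤
        ((crossSet H A).card - (H.neighborFinset x ∩ A).card)
          + (H.neighborFinset x \ insert x A).card ∧
      (H.neighborFinset x ∩ A).card + (H.neighborFinset x \ insert x A).card ≤ 2 := by
    intro x hx
    constructor
    · have hsub : crossSet H (insert x A) ⊆
          ((crossSet H A).filter (fun p => p.2 ≠ x)) ∪
            ({x} ×ˢ (H.neighborFinset x \ insert x A)) := by
        intro p hp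
        simp only [crossSet, mem_filter, mem_univ, true_and, Finset.mem_insert] at hp
        obtain ⟨hadj, h1, h2⟩ := hp
        simp only [Finset.mem_union, mem_filter, crossSet, mem_univ, true_and,
          Finset.mem_product, Finset.mem_singleton, Finset.mem_sdiff, mem_neighborFinset]
        rcases h1 with rfl | h1
        · exact Or.inr ⟨rfl, hadj, fun h => h2 (by simpa using h)⟩
        · refine Or.inl ⟨⟨hadj, h1, fun h => h2 (Or.inr h)⟩, fun h => h2 (Or.inl h)⟩
      calc (crossSet H (insert x A)).card ≤ _ := Finset.card_le_card hsub
        _ ≤ ((crossSet H A).filter (fun p => p.2 ≠ x)).card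
            + ({x} ×ˢ (H.neighborFinset x \ insert x A)).card := Finset.card_union_le _ _
        _ ≤ _ := by
            gcongr
            · -- filter card = total - (p.2 = x) count, and (p.2=x) count = inter card
              have h1 : ((crossSet H A).filter (fun p => p.2 = x)).card
                  = (H.neighborFinset x ∩ A).card := by
                apply Finset.card_bij (fun p _ => p.1)
                · intro p hp
                  simp only [mem_filter, crossSet, mem_univ, true_and] at hp
                  obtain ⟨⟨hadj, h1, h2⟩, he⟩ := hp
                  simp only [Finset.mem_inter, mem_neighborFinset]
                  exact ⟨(he ▸ hadj).symm, h1⟩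
                · intro p hp q hq hpq
                  simp only [mem_filter] at hp hq
                  exact Prod.ext hpq (hp.2.trans hq.2.symm)
                · intro u hu
                  simp only [Finset.mem_inter, mem_neighborFinset] at hu
                  exact ⟨(u, x), by simp [crossSet, hu.1.symm, hu.2, hx], rfl⟩
              have h2 := Finset.card_filter_add_card_filter_not
                (s := crossSet H A) (p := fun p => p.2 = x)
              have h3 : ((crossSet H A).filter (fun p => ¬ p.2 = x)).card
                  = ((crossSet H A).filter (fun p => p.2 ≠ x)).card := rfl
              omega
            · simp
    · have : (H.neighborFinset x ∩ A) ∪ (H.neighborFinset x \ insert x A)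
          ⊆ H.neighborFinset x := by
        intro u hu
        rcases Finset.mem_union.mp hu with h | h
        exacts [(Finset.mem_inter.mp h).1, (Finset.mem_sdiff.mp h).1]
      have hd : Disjoint (H.neighborFinset x ∩ A) (H.neighborFinset x \ insert x A) := by
        refine Finset.disjoint_left.mpr fun u hu1 hu2 => ?_
        exact (Finset.mem_sdiff.mp hu2).2 (Finset.mem_insert_of_mem (Finset.mem_inter.mp hu1).2)
      calc _ = ((H.neighborFinset x ∩ A) ∪ (H.neighborFinset x \ insert x A)).card :=
            (Finset.card_union_of_disjoint hd).symm
        _ ≤ (H.neighborFinset x).card := Finset.card_le_card this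
        _ ≤ 2 := hdeg x
  by_cases hex : ∃ x, x ∉ A ∧ ∃ u ∈ A, H.Adj u x
  · obtain ⟨x, hx, u, hu, hadj⟩ := hex
    refine ⟨x, hx, ?_⟩
    obtain ⟨hb, hs⟩ := key x hx
    have hin : 1 ≤ (H.neighborFinset x ∩ A).card := by
      refine Finset.card_pos.mpr ⟨u, ?_⟩
      simp [mem_neighborFinset, hadj.symm, hu]
    omega
  · push_neg at hex
    obtain ⟨x, hx⟩ : ∃ x, x ∉ A := by
      by_contra h; push_neg at h; exact hne (Finset.eq_univ_iff_forall.mpr h)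
    refine ⟨x, hx, ?_⟩
    obtain ⟨hb, hs⟩ := key x hx
    have hzero : (crossSet H A).card = 0 := by
      rw [Finset.card_eq_zero]
      ext p
      simp only [crossSet, mem_filter, mem_univ, true_and, Finset.notMem_empty, iff_false]
      rintro ⟨hadj, h1, h2⟩
      exact hex p.2 h2 p.1 h1 hadj
    omega
open scoped Classical in
lemma build_list (hdeg : ∀ v, (H.neighborFinset v).card ≤ 2) :
    ∀ (n : ℕ) (A : Finset W), Fintype.card W - A.card ≤ n → (crossSet H A).card ≤ 2 →
    ∃ l : List W, l.Nodup ∧ (∀ x, x ∈ l ↔ x ∉ A) ∧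
      ∀ k, (crossSet H (A ∪ (l.take k).toFinset)).card ≤ 2 := by
  intro n
  induction n with
  | zero =>
    intro A hcard hA
    have hAu : A = Finset.univ := by
      have h1 := Finset.card_le_univ A
      have h2 : (Finset.univ : Finset W).card = Fintype.card W := Finset.card_univ
      exact Finset.eq_univ_of_card A (by omega)
    exact ⟨[], List.nodup_nil, fun x => by simp [hAu], fun k => by simpa using hA⟩
  | succ n ih =>
    intro A hcard hA
    by_cases hAu : A = Finset.univ
    · exact ⟨[], List.nodup_nil, fun x => by simp [hAu], fun k => by simpa using hA⟩
    · obtain ⟨x, hx, hx2⟩ := cross_step H hdeg A hA hAu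
      have hcard' : Fintype.card W - (insert x A).card ≤ n := by
        rw [Finset.card_insert_of_notMem hx]
        have h1 : A.card < Finset.univ.card := Finset.card_lt_card
          (Finset.ssubset_univ_iff.mpr hAu)
        have h2 : (Finset.univ : Finset W).card = Fintype.card W := Finset.card_univ
        omega
      obtain ⟨l, hnd, hmem, hpre⟩ := ih (insert x A) hcard' hx2
      refine ⟨x :: l, ?_, ?_, ?_⟩
      · exact List.nodup_cons.mpr ⟨fun h => by simp [hmem x] at h, hnd⟩
      · intro y
        by_cases hyx : y = x
        · subst hyx; simp [hx]
        · simp only [List.mem_cons, hmem y, Finset.mem_insert]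
          tauto
      · intro k
        cases k with
        | zero => simpa using hA
        | succ k =>
          have : A ∪ ((x :: l).take (k+1)).toFinset
              = insert x A ∪ (l.take k).toFinset := by
            simp only [List.take_succ_cons, List.toFinset_cons]
            ext y
            simp only [Finset.mem_union, Finset.mem_insert]
            tauto
          rw [this]
          exact hpre k
open scoped Classical in
lemma mem_take_iff {α : Type*} [DecidableEq α] (u : α) :
    ∀ (l : List α) (n : ℕ), u ∈ l → (u ∈ l.take n ↔ l.idxOf u < n) := by
  intro l
  induction l with
  | nil => intro n h; simp at h
  | cons a l ih =>
    intro n hmem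
    cases n with
    | zero => simp
    | succ n =>
      by_cases hua : u = a
      · subst hua; simp [List.idxOf_cons_self]
      · have hul : u ∈ l := by
          rcases List.mem_cons.mp hmem with h | h
          · exact absurd h hua
          · exact h
        simp only [List.take_succ_cons, List.mem_cons, hua, false_or,
          List.idxOf_cons_ne _ (Ne.symm hua)]
        rw [ih n hul]
        omega

open scoped Classical in
lemma pathwidth_le_two_of_maxdeg (hdeg : ∀ v, (H.neighborFinset v).card ≤ 2) :
    pathwidth H ≤ 2 := by
  have hc0 : (crossSet H (∅ : Finset W)).card ≤ 2 := by
    have : crossSet H (∅ : Finset W) = ∅ := by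
      ext p; simp [crossSet]
    simp [this]
  obtain ⟨l, hnd, hmem, hpre⟩ := build_list H hdeg (Fintype.card W) ∅ (by simp) hc0
  have hmem' : ∀ x : W, x ∈ l := fun x => (hmem x).mpr (Finset.notMem_empty x)
  have hpre' : ∀ k, (crossSet H (l.take k).toFinset).card ≤ 2 := by
    intro k; have := hpre k; simpa using this
  have hidx : ∀ u : W, l.idxOf u < l.length :=
    fun u => List.idxOf_lt_length_iff.mpr (hmem' u)
  have htake : ∀ (u : W) (k : ℕ), u ∈ (l.take k).toFinset ↔ l.idxOf u < k := by
    intro u k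
    rw [List.mem_toFinset]
    exact mem_take_iff u l k (hmem' u)
  set bag : Fin (l.length + 1) → Finset W := fun i =>
    Finset.univ.filter (fun u => l.idxOf u ≤ (i : ℕ) ∧
      (l.idxOf u = (i : ℕ) ∨ ∃ w, H.Adj u w ∧ (i : ℕ) ≤ l.idxOf w)) with hbagdef
  have hmem_bag : ∀ (u : W) (i : Fin (l.length + 1)),
      u ∈ bag i ↔ (l.idxOf u ≤ (i : ℕ) ∧
        (l.idxOf u = (i : ℕ) ∨ ∃ w, H.Adj u w ∧ (i : ℕ) ≤ l.idxOf w)) := by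
    intro u i; rw [hbagdef]; simp
  have hbag3 : ∀ i, (bag i).card ≤ 3 := by
    intro i
    set S1 := Finset.univ.filter (fun u : W => l.idxOf u = (i : ℕ)) with hS1
    set S2 := (crossSet H (l.take (i : ℕ)).toFinset).image Prod.fst with hS2
    have hsub : bag i ⊆ S1 ∪ S2 := by
      intro u hu
      rw [hmem_bag] at hu
      obtain ⟨hle, hor⟩ := hu
      rcases hor with h | ⟨w, hw1, hw2⟩
      · exact Finset.mem_union_left _ (by simp [hS1, h])
      · rcases eq_or_lt_of_le hle with h | h
        · exact Finset.mem_union_left _ (by simp [hS1, h])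
        · refine Finset.mem_union_right _ ?_
          rw [hS2, Finset.mem_image]
          refine ⟨(u, w), ?_, rfl⟩
          simp only [crossSet, Finset.mem_filter, Finset.mem_univ, true_and]
          exact ⟨hw1, (htake u _).mpr h, fun hc => by
            have := (htake w _).mp hc; omega⟩
    have h1 : S1.card ≤ 1 := by
      refine Finset.card_le_one.mpr ?_
      intro a ha b hb
      simp only [hS1, Finset.mem_filter, Finset.mem_univ, true_and] at ha hb
      have ha' : l[l.idxOf a]'(hidx a) = a := List.getElem_idxOf (hidx a)
      have hb' : l[l.idxOf b]'(hidx b) = b := List.getElem_idxOf (hidx b)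
      rw [← ha', ← hb']
      congr 1
      omega
    have h2 : S2.card ≤ 2 := le_trans Finset.card_image_le (hpre' (i : ℕ))
    calc (bag i).card ≤ (S1 ∪ S2).card := Finset.card_le_card hsub
      _ ≤ S1.card + S2.card := Finset.card_union_le _ _
      _ ≤ 3 := by omega
  refine le_trans (Nat.sInf_le ⟨⟨l.length + 1, Nat.succ_pos _, bag, ?_, ?_, ?_⟩, rfl⟩) ?_
  · intro v
    refine ⟨⟨l.idxOf v, by have := hidx v; omega⟩, ?_⟩
    rw [hmem_bag]
    simp
  · intro u v hadj
    rcases le_or_gt (l.idxOf u) (l.idxOf v) with h | h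
    · refine ⟨⟨l.idxOf v, by have := hidx v; omega⟩, ?_, ?_⟩
      · rw [hmem_bag]; exact ⟨h, Or.inr ⟨v, hadj, le_refl _⟩⟩
      · rw [hmem_bag]; simp
    · refine ⟨⟨l.idxOf u, by have := hidx u; omega⟩, ?_, ?_⟩
      · rw [hmem_bag]; simp
      · rw [hmem_bag]; exact ⟨le_of_lt h, Or.inr ⟨u, hadj.symm, le_refl _⟩⟩
  · intro v i j k hij hjk hi hk
    rw [hmem_bag] at hi hk ⊢
    have hij' : (i : ℕ) ≤ (j : ℕ) := hij
    have hjk' : (j : ℕ) ≤ (k : ℕ) := hjk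
    refine ⟨le_trans hi.1 hij', ?_⟩
    rcases hk.2 with h | ⟨w, hw1, hw2⟩
    · exact Or.inl (by have := hi.1; omega)
    · exact Or.inr ⟨w, hw1, le_trans hjk' hw2⟩
  · show (Finset.univ.sup fun i => (bag i).card) - 1 ≤ 2
    have := Finset.sup_le (fun i (_ : i ∈ Finset.univ) => hbag3 i)
    omega

end Aux

lemma nonadj_of_bipartite {X : Type*} {H : SimpleGraph X} (hbip : IsBipartiteGraph H)
    {v a b : X} (hva : H.Adj v a) (hvb : H.Adj v b) : ¬ H.Adj a b := by
  obtain ⟨A, B, hU, _, hA, hB⟩ := hbip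
  have hm : ∀ x : X, x ∈ A ∨ x ∈ B := fun x => by
    have : x ∈ A ∪ B := hU ▸ Set.mem_univ x
    exact this
  intro hab
  rcases hm v with hv | hv
  · have ha' : a ∈ B := (hm a).resolve_left (fun h => hA hv h hva)
    have hb' : b ∈ B := (hm b).resolve_left (fun h => hA hv h hvb)
    exact hB ha' hb' hab
  · have ha' : a ∈ A := (hm a).resolve_right (fun h => hB hv h hva)
    have hb' : b ∈ A := (hm b).resolve_right (fun h => hB hv h hvb)
    exact hA ha' hb' hab

theorem clawfree_bipartitePathwidth_le_two {V : Type*} [Fintype V] (G : SimpleGraph V)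
    (hclaw : ¬ HasInducedCopy G claw) :
    ∀ S : Set V, IsBipartiteGraph (G.induce S) → pathwidth (G.induce S) ≤ 2 := by
  intro S hbip
  haveI : Fintype ↥S := Fintype.ofFinite _
  apply pathwidth_le_two_of_maxdeg
  intro v
  by_contra hdeg
  push_neg at hdeg
  obtain ⟨a, ha, b, hb, c, hc, hab, hac, hbc⟩ := Finset.two_lt_card.mp hdeg
  rw [SimpleGraph.mem_neighborFinset] at ha hb hc
  -- adjacency in G
  have gva : G.Adj ↑v ↑a := ha
  have gvb : G.Adj ↑v ↑b := hb
  have gvc : G.Adj ↑v ↑c := hc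
  have nab : ¬ G.Adj ↑a ↑b := nonadj_of_bipartite hbip ha hb
  have nac : ¬ G.Adj ↑a ↑c := nonadj_of_bipartite hbip ha hc
  have nbc : ¬ G.Adj ↑b ↑c := nonadj_of_bipartite hbip hb hc
  have hab' : (a : V) ≠ ↑b := fun h => hab (Subtype.ext h)
  have hac' : (a : V) ≠ ↑c := fun h => hac (Subtype.ext h)
  have hbc' : (b : V) ≠ ↑c := fun h => hbc (Subtype.ext h)
  have nba : ¬ G.Adj ↑b ↑a := fun h => nab h.symm
  have nca : ¬ G.Adj ↑c ↑a := fun h => nac h.symm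
  have ncb : ¬ G.Adj ↑c ↑b := fun h => nbc h.symm
  set g : Fin 1 ⊕ Fin 3 → V := Sum.elim (fun _ => (v : V)) (![(a : V), b, c]) with hg
  have hadjg : ∀ p q : Fin 1 ⊕ Fin 3, G.Adj (g p) (g q) ↔ claw.Adj p q := by
    rintro (p | p) (q | q) <;> fin_cases p <;> fin_cases q <;>
      simp [hg, claw, gva, gvb, gvc, gva.symm, gvb.symm, gvc.symm, nab, nac, nbc,
        nba, nca, ncb]
  have gl : g (Sum.inl 0) = (v : V) := rfl
  have gr0 : g (Sum.inr 0) = (a : V) := rfl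
  have gr1 : g (Sum.inr 1) = (b : V) := rfl
  have gr2 : g (Sum.inr 2) = (c : V) := rfl
  have hginj : Function.Injective g := by
    have hne : ∀ x y : Fin 1 ⊕ Fin 3, x ≠ y → g x ≠ g y := by
      rintro (x | x) (y | y) hxy <;> fin_cases x <;> fin_cases y <;>
        simp only [gl, gr0, gr1, gr2] <;>
        first
          | exact absurd rfl hxy
          | exact gva.ne
          | exact gvb.ne
          | exact gvc.ne
          | exact gva.ne'
          | exact gvb.ne'
          | exact gvc.ne'
          | exact hab'
          | exact hac'
          | exact hbc'
          | exact Ne.symm hab'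
          | exact Ne.symm hac'
          | exact Ne.symm hbc'
    intro x y h
    by_contra hxy
    exact hne x y hxy h
  apply hclaw
  refine ⟨Set.range g, ⟨(SimpleGraph.Iso.symm ?_)⟩⟩
  exact { toEquiv := Equiv.ofInjective g hginj,
          map_rel_iff' := by
            intro p q
            rw [← hadjg p q]
            rfl }
end

section
/- Let α ≥ 1 be an integer and let M_0, M_1, …, M_α be positive real numbers satisfying (i+1)·M_{i−1}·M_{i+1} ≤ i·M_i² for all integers i with 1 ≤ i ≤ α − 1. Then for every m ∈ {1, …, α} and every k ∈ {1, …, m}, M_{m−k}/M_m ≤ exp(−(k−1)²/(2m)) · (M_{m−1}/M_m)^k. -/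
lemma lemA (α : ℕ) (M : ℕ → ℝ)
    (hpos : ∀ i, i ≤ α → 0 < M i)
    (hlc : ∀ i : ℕ, 1 ≤ i → i + 1 ≤ α →
      ((i : ℝ) + 1) * M (i - 1) * M (i + 1) ≤ (i : ℝ) * (M i) ^ 2) :
    ∀ j : ℕ, 1 ≤ j → ∀ m : ℕ, j ≤ m → m ≤ α →
      (m : ℝ) * (M (j - 1) * M m) ≤ (j : ℝ) * (M j * M (m - 1)) := by
  intro j hj m hjm
  induction m, hjm using Nat.le_induction with
  | base => intro _; ring_nf; rfl
  | succ m hjm IH =>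
    intro hm1
    have hm : m ≤ α := by omega
    have h1 := IH hm
    have hm' : 1 ≤ m := le_trans hj hjm
    have h2 := hlc m hm' hm1
    have p0 := hpos (j - 1) (by omega)
    have p1 := hpos j (by omega)
    have p2 := hpos (m - 1) (by omega)
    have p3 := hpos m (by omega)
    have p4 := hpos (m + 1) (by omega)
    have hmpos : (0:ℝ) < m := by exact_mod_cast hm'
    have key : ((↑(m+1) : ℝ) * (M (j - 1) * M (m + 1))) * ((m:ℝ) * M m) ≤
        ((j:ℝ) * (M j * M ((m+1) - 1))) * ((m:ℝ) * M m) := by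
      have e : (m + 1) - 1 = m := by omega
      rw [e]
      push_cast
      have h3 := mul_le_mul_of_nonneg_left h1
        (le_of_lt (by positivity : (0:ℝ) < ((m:ℝ)+1) * M (m+1)))
      have h4 := mul_le_mul_of_nonneg_left h2
        (le_of_lt (by positivity : (0:ℝ) < (j:ℝ) * M j))
      nlinarith [h3, h4]
    exact le_of_mul_le_mul_right key (by positivity)

/-- For positive reals `M_0, …, M_α` satisfying the strengthened
log-concavity condition `(i+1)·M_{i−1}·M_{i+1} ≤ i·M_i²` for `1 ≤ i ≤ α−1`,
we have `M_{m−k}/M_m ≤ exp(−(k−1)²/(2m))·(M_{m−1}/M_m)^k` for all `1 ≤ k ≤ m ≤ α`. -/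
theorem logconcave_ratio_bound (α : ℕ) (hα : 1 ≤ α) (M : ℕ → ℝ)
    (hpos : ∀ i, i ≤ α → 0 < M i)
    (hlc : ∀ i : ℕ, 1 ≤ i → i + 1 ≤ α →
      ((i : ℝ) + 1) * M (i - 1) * M (i + 1) ≤ (i : ℝ) * (M i) ^ 2) :
    ∀ m : ℕ, 1 ≤ m → m ≤ α → ∀ k : ℕ, 1 ≤ k → k ≤ m →
      M (m - k) / M m ≤
        Real.exp (-((k : ℝ) - 1) ^ 2 / (2 * m)) * (M (m - 1) / M m) ^ k := by
  intro m hm hmα k hk hkm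
  have hmpos : (0:ℝ) < m := by exact_mod_cast hm
  -- step claim
  have step : ∀ k : ℕ, 1 ≤ k → k ≤ m →
      M (m - k) / M m ≤ (∏ j ∈ Finset.range k, (1 - (j:ℝ)/m)) * (M (m - 1) / M m) ^ k := by
    intro k hk
    induction k, hk using Nat.le_induction with
    | base =>
      intro _
      simp
    | succ k hk IH =>
      intro hk1
      have IH' := IH (by omega)
      set j := m - k with hjdef
      have hj1 : 1 ≤ j := by omega
      have hjm : j ≤ m := by omega
      have hA := lemA α M hpos hlc j hj1 m hjm hmα
      have pj := hpos j (by omega)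
      have pj1 := hpos (j - 1) (by omega)
      have pm := hpos m hmα
      have pm1 := hpos (m - 1) (by omega)
      have hr : M (j - 1) / M j ≤ (1 - (k:ℝ)/m) * (M (m - 1) / M m) := by
        have hjc : (j : ℝ) = (m:ℝ) - k := by
          rw [hjdef, Nat.cast_sub (by omega : k ≤ m)]
        have : (1 - (k:ℝ)/m) * (M (m - 1) / M m) = ((j:ℝ) * M (m-1)) / ((m:ℝ) * M m) := by
          rw [hjc]; field_simp
        rw [this, div_le_div_iff₀ pj (by positivity)]
        nlinarith [hA]
      have hsplit : M (m - (k + 1)) / M m = (M (j - 1) / M j) * (M j / M m) := by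
        have e : m - (k + 1) = j - 1 := by omega
        rw [e]
        field_simp
      rw [hsplit]
      have hstep2 : (M (j - 1) / M j) * (M j / M m) ≤
          ((1 - (k:ℝ)/m) * (M (m - 1) / M m)) * ((∏ j ∈ Finset.range k, (1 - (j:ℝ)/m)) * (M (m - 1) / M m) ^ k) := by
        apply mul_le_mul hr IH' (by positivity)
        have hkm1 : (k:ℝ)/m ≤ 1 := by
          rw [div_le_one hmpos]; exact_mod_cast (by omega : k ≤ m)
        have := div_nonneg pm1.le pm.le
        nlinarith
      refine hstep2.trans (le_of_eq ?_)
      rw [Finset.prod_range_succ]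
      ring
  -- product bound
  have hprod : (∏ j ∈ Finset.range k, (1 - (j:ℝ)/m)) ≤ Real.exp (-((k : ℝ) - 1) ^ 2 / (2 * m)) := by
    have h1 : (∏ j ∈ Finset.range k, (1 - (j:ℝ)/m)) ≤ ∏ j ∈ Finset.range k, Real.exp (-((j:ℝ)/m)) := by
      apply Finset.prod_le_prod
      · intro i hi
        have hik : i < k := Finset.mem_range.mp hi
        have : (i:ℝ)/m ≤ 1 := by
          rw [div_le_one hmpos]; exact_mod_cast (by omega : i ≤ m)
        linarith
      · intro i _
        have := Real.add_one_le_exp (-((i:ℝ)/m))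
        linarith
    have h2 : ∏ j ∈ Finset.range k, Real.exp (-((j:ℝ)/m)) = Real.exp (∑ j ∈ Finset.range k, -((j:ℝ)/m)) := by
      rw [Real.exp_sum]
    have hs : (∑ j ∈ Finset.range k, (j:ℝ)) = (k:ℝ) * ((k:ℝ) - 1) / 2 := by
      have h := Finset.sum_range_id_mul_two k
      have hc : ((∑ j ∈ Finset.range k, j : ℕ) : ℝ) * 2 = ((k * (k-1) : ℕ) : ℝ) := by
        exact_mod_cast congrArg (Nat.cast : ℕ → ℝ) h
      push_cast [Nat.cast_sub hk] at hc
      push_cast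
      linarith
    have h3 : (∑ j ∈ Finset.range k, -((j:ℝ)/m)) = -((k:ℝ) * ((k:ℝ) - 1) / 2) / m := by
      rw [Finset.sum_neg_distrib, ← Finset.sum_div, hs, neg_div]
    have hkk : (1:ℝ) ≤ k := by exact_mod_cast hk
    calc (∏ j ∈ Finset.range k, (1 - (j:ℝ)/m)) ≤ Real.exp (-((k:ℝ) * ((k:ℝ) - 1) / 2) / m) := by
          rw [← h3, ← h2]; exact h1
      _ ≤ Real.exp (-((k : ℝ) - 1) ^ 2 / (2 * m)) := by
          apply Real.exp_le_exp.mpr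
          rw [div_le_div_iff₀ hmpos (by positivity)]
          nlinarith
  calc M (m - k) / M m ≤ (∏ j ∈ Finset.range k, (1 - (j:ℝ)/m)) * (M (m - 1) / M m) ^ k :=
        step k hk hkm
    _ ≤ Real.exp (-((k : ℝ) - 1) ^ 2 / (2 * m)) * (M (m - 1) / M m) ^ k := by
        apply mul_le_mul_of_nonneg_right hprod
        have pm := hpos m hmα
        have pm1 := hpos (m - 1) (by omega)
        positivity
end

section
/- Let α ≥ 1 be an integer and let M_0, M_1, …, M_α be positive real numbers satisfying the Newton-type inequalities i(α−i)·M_i² ≥ (i+1)(α−i+1)·M_{i−1}·M_{i+1} for all integers i with 1 ≤ i ≤ α − 1. Let m be an index with M_m = max_{0 ≤ i ≤ α} M_i. Then M_{m−k} ≤ exp(−(k−1)²/(2m))·M_m for every k ∈ {1, …, m}, and M_{m+k} ≤ exp(−(k−1)²/(2(α−m)))·M_m for every k ∈ {1, …, α−m}. -/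
open Real

lemma tail_aux (N : ℝ) (K : ℕ) (f : ℕ → ℝ)
    (hpos : ∀ k, k ≤ K → 0 < f k) (hN : 0 < N)
    (hstep : ∀ k : ℕ, k + 1 ≤ K → N * f (k + 1) ≤ (N - k) * f k) :
    ∀ k : ℕ, k ≤ K → f k ≤ Real.exp (-((k : ℝ) * ((k : ℝ) - 1)) / (2 * N)) * f 0 := by
  intro k
  induction k with
  | zero => intro _; simp
  | succ k ih =>
    intro hk1
    have hk : k ≤ K := Nat.le_of_succ_le hk1
    have hfk := hpos k hk
    have hfk1 := hpos (k + 1) hk1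
    have hs := hstep k hk1
    have hNk : 0 < N - (k : ℝ) := by nlinarith [mul_pos hN hfk1]
    have h1 : f (k + 1) ≤ ((N - k) / N) * f k := by
      rw [div_mul_eq_mul_div, le_div_iff₀ hN]
      nlinarith
    have h2 : (N - (k : ℝ)) / N ≤ Real.exp (-(k : ℝ) / N) := by
      have h := Real.add_one_le_exp (-(k : ℝ) / N)
      have hx : (N - (k : ℝ)) / N = -(k : ℝ) / N + 1 := by field_simp; ring
      rw [hx]; exact h
    calc f (k + 1) ≤ ((N - k) / N) * f k := h1
      _ ≤ Real.exp (-(k : ℝ) / N) * f k := mul_le_mul_of_nonneg_right h2 hfk.le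
      _ ≤ Real.exp (-(k : ℝ) / N) * (Real.exp (-((k : ℝ) * ((k : ℝ) - 1)) / (2 * N)) * f 0) :=
          mul_le_mul_of_nonneg_left (ih hk) (Real.exp_pos _).le
      _ = Real.exp (-((((k : ℕ) + 1 : ℕ) : ℝ) * ((((k : ℕ) + 1 : ℕ) : ℝ) - 1)) / (2 * N)) * f 0 := by
          rw [← mul_assoc, ← Real.exp_add]
          push_cast
          congr 2
          field_simp
          ring

/-- For positive reals `M_0, …, M_α` satisfying Newton-type inequalities
`i(α−i)·M_i² ≥ (i+1)(α−i+1)·M_{i−1}·M_{i+1}` for `1 ≤ i ≤ α−1`, if `M_m` is the maximum,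
then `M_{m−k} ≤ exp(−(k−1)²/(2m))·M_m` for `1 ≤ k ≤ m` and
`M_{m+k} ≤ exp(−(k−1)²/(2(α−m)))·M_m` for `1 ≤ k ≤ α−m`. -/
theorem newton_max_tail_bound (α : ℕ) (hα : 1 ≤ α) (M : ℕ → ℝ)
    (hpos : ∀ i, i ≤ α → 0 < M i)
    (hnewton : ∀ i : ℕ, 1 ≤ i → i + 1 ≤ α →
      ((i : ℝ) + 1) * ((α : ℝ) - i + 1) * M (i - 1) * M (i + 1) ≤
        (i : ℝ) * ((α : ℝ) - i) * (M i) ^ 2)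
    (m : ℕ) (hm : m ≤ α) (hmax : ∀ i, i ≤ α → M i ≤ M m) :
    (∀ k : ℕ, 1 ≤ k → k ≤ m →
        M (m - k) ≤ Real.exp (-((k : ℝ) - 1) ^ 2 / (2 * m)) * M m) ∧
    (∀ k : ℕ, 1 ≤ k → k ≤ α - m →
        M (m + k) ≤ Real.exp (-((k : ℝ) - 1) ^ 2 / (2 * ((α : ℝ) - m))) * M m) := by
  -- Left ratio lemma: m·M_{j-1} ≤ j·M_j  for 1 ≤ j ≤ m
  have L : ∀ d j : ℕ, j + d = m → 1 ≤ j → (m : ℝ) * M (j - 1) ≤ (j : ℝ) * M j := by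
    intro d
    induction d with
    | zero =>
      intro j hjd hj1
      simp only [Nat.add_zero] at hjd
      subst hjd
      have h1 : M (j - 1) ≤ M j := hmax (j - 1) (le_trans (Nat.sub_le _ _) hm)
      exact mul_le_mul_of_nonneg_left h1 (Nat.cast_nonneg j)
    | succ d ih =>
      intro j hjd hj1
      have hjm : j + 1 + d = m := by omega
      have hIH := ih (j + 1) hjm (by omega)
      have hj1α : j + 1 ≤ α := by omega
      have hN := hnewton j hj1 hj1α
      have p1 : 0 < M (j - 1) := hpos _ (by omega)
      have p2 : 0 < M j := hpos _ (by omega)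
      have p3 : 0 < M (j + 1) := hpos _ (by omega)
      have haj : (j : ℝ) + 1 ≤ (α : ℝ) := by exact_mod_cast hj1α
      have hj1R : (1 : ℝ) ≤ (j : ℝ) := by exact_mod_cast hj1
      push_cast at hIH
      -- (j+1)·M_{j-1}·M_{j+1} ≤ j·M_j²
      have h3 : ((j : ℝ) + 1) * M (j - 1) * M (j + 1) ≤ (j : ℝ) * M j ^ 2 := by
        nlinarith [mul_pos p1 p3]
      nlinarith [mul_le_mul_of_nonneg_right hIH p1.le, mul_pos p1 p2]
  -- Right ratio lemma: (α−m)·M_j ≤ (α−j+1)·M_{j-1}  for m+1 ≤ j ≤ α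
  have R : ∀ j : ℕ, m + 1 ≤ j → j ≤ α → ((α : ℝ) - m) * M j ≤ ((α : ℝ) - j + 1) * M (j - 1) := by
    intro j hj
    induction j, hj using Nat.le_induction with
    | base =>
      intro hjα
      have h1 : M (m + 1) ≤ M m := hmax (m + 1) hjα
      have hC : (0 : ℝ) ≤ (α : ℝ) - m := by
        have : (m : ℝ) ≤ α := by exact_mod_cast hm
        linarith
      have hcast : ((α : ℝ) - (m + 1 : ℕ) + 1) = (α : ℝ) - m := by push_cast; ring
      rw [hcast, Nat.add_sub_cancel]
      exact mul_le_mul_of_nonneg_left h1 hC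
    | succ j hj ih =>
      intro hj1α
      have hjα : j ≤ α := Nat.le_of_succ_le hj1α
      have hIH := ih hjα
      have hj1 : 1 ≤ j := by omega
      have hN := hnewton j hj1 hj1α
      have p1 : 0 < M (j - 1) := hpos _ (by omega)
      have p2 : 0 < M j := hpos _ (by omega)
      have p3 : 0 < M (j + 1) := hpos _ (by omega)
      have haj : (j : ℝ) + 1 ≤ (α : ℝ) := by exact_mod_cast hj1α
      have hj1R : (1 : ℝ) ≤ (j : ℝ) := by exact_mod_cast hj1
      have hcast : ((α : ℝ) - (j + 1 : ℕ) + 1) = (α : ℝ) - j := by push_cast; ring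
      rw [hcast, Nat.add_sub_cancel]
      push_cast
      -- (α−j+1)·M_{j-1}·M_{j+1} ≤ (α−j)·M_j²
      have h3 : ((α : ℝ) - j + 1) * M (j - 1) * M (j + 1) ≤ ((α : ℝ) - j) * M j ^ 2 := by
        nlinarith [mul_pos p1 p3]
      nlinarith [mul_le_mul_of_nonneg_right hIH p3.le, mul_pos p2 p3]
  constructor
  · -- left tail
    intro k hk1 hkm
    have hm0 : 0 < m := lt_of_lt_of_le hk1 hkm
    have hmR : (0 : ℝ) < (m : ℝ) := by exact_mod_cast hm0
    have key := tail_aux (m : ℝ) m (fun k => M (m - k))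
      (fun k _ => hpos _ (by omega)) hmR
      (fun k hk' => by
        have hL := L k (m - k) (by omega) (by omega)
        have hc : ((m - k : ℕ) : ℝ) = (m : ℝ) - k := by
          push_cast [Nat.cast_sub (by omega : k ≤ m)]; ring
        have hidx : m - (k + 1) = m - k - 1 := by omega
        simpa [hidx, hc] using hL) k hkm
    simp only [Nat.sub_zero] at key
    have hexp : Real.exp (-((k : ℝ) * ((k : ℝ) - 1)) / (2 * (m : ℝ))) ≤
        Real.exp (-((k : ℝ) - 1) ^ 2 / (2 * (m : ℝ))) := by
      apply Real.exp_le_exp.mpr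
      have hkR : (1 : ℝ) ≤ (k : ℝ) := by exact_mod_cast hk1
      rw [div_le_div_iff₀ (by positivity) (by positivity)]
      nlinarith
    calc M (m - k) ≤ Real.exp (-((k : ℝ) * ((k : ℝ) - 1)) / (2 * (m : ℝ))) * M m := key
      _ ≤ Real.exp (-((k : ℝ) - 1) ^ 2 / (2 * (m : ℝ))) * M m :=
          mul_le_mul_of_nonneg_right hexp (hpos m hm).le
  · -- right tail
    intro k hk1 hkm
    have hm0 : 0 < α - m := lt_of_lt_of_le hk1 hkm
    have hNR : (0 : ℝ) < (α : ℝ) - m := by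
      have : ((α - m : ℕ) : ℝ) = (α : ℝ) - m := by push_cast [Nat.cast_sub hm]; ring
      rw [← this]; exact_mod_cast hm0
    have key := tail_aux ((α : ℝ) - m) (α - m) (fun k => M (m + k))
      (fun k hk' => hpos _ (by omega)) hNR
      (fun k hk' => by
        have hR := R (m + k + 1) (by omega) (by omega)
        have hc : ((α : ℝ) - (m + k + 1 : ℕ) + 1) = ((α : ℝ) - m) - k := by push_cast; ring
        have hidx : m + k + 1 - 1 = m + k := by omega
        rw [hc, hidx] at hR
        simpa [add_assoc] using hR) k hkm
    simp only [Nat.add_zero] at key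
    have hexp : Real.exp (-((k : ℝ) * ((k : ℝ) - 1)) / (2 * ((α : ℝ) - m))) ≤
        Real.exp (-((k : ℝ) - 1) ^ 2 / (2 * ((α : ℝ) - m))) := by
      apply Real.exp_le_exp.mpr
      have hkR : (1 : ℝ) ≤ (k : ℝ) := by exact_mod_cast hk1
      rw [div_le_div_iff₀ (by positivity) (by positivity)]
      nlinarith
    calc M (m + k) ≤ Real.exp (-((k : ℝ) * ((k : ℝ) - 1)) / (2 * ((α : ℝ) - m))) * M m := key
      _ ≤ Real.exp (-((k : ℝ) - 1) ^ 2 / (2 * ((α : ℝ) - m))) * M m :=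
          mul_le_mul_of_nonneg_right hexp (hpos m hm).le
end

section
/- Let H be a finite simple graph containing no pair of true twins, let G = (V,E) be a finite simple graph, and let w : V → ℕ with w(v) ≥ 1 for all v ∈ V. Then G contains an induced subgraph isomorphic to H if and only if the blow-up G_w contains an induced subgraph isomorphic to H. -/
open SimpleGraph

/-- Two distinct vertices are true twins if they have the same closed neighbourhood. -/
def TrueTwins {V : Type*} (G : SimpleGraph V) (u v : V) : Prop :=
  u ≠ v ∧ insert u (G.neighborSet u) = insert v (G.neighborSet v)

/-- The blow-up `G_w` of `G`: each vertex `v` is replaced by a clique of size `w v`,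
and each edge by a complete bipartite graph between the corresponding cliques. -/
def blowup {V : Type*} (G : SimpleGraph V) (w : V → ℕ) :
    SimpleGraph ((v : V) × Fin (w v)) where
  Adj x y := x ≠ y ∧ (x.1 = y.1 ∨ G.Adj x.1 y.1)
  symm := ⟨fun x y h => ⟨h.1.symm, h.2.imp Eq.symm (fun a => a.symm)⟩⟩
  loopless := ⟨fun x h => h.1 rfl⟩

/-- If `H` has no pair of true twins, then a finite simple graph `G` contains
an induced copy of `H` if and only if the blow-up `G_w` does (weights `w(v) ≥ 1`). -/
theorem hasInducedCopy_blowup_iff {W V : Type*} [Fintype W] [Fintype V]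
    (H : SimpleGraph W) (hH : ∀ u v : W, ¬ TrueTwins H u v)
    (G : SimpleGraph V) (w : V → ℕ) (hw : ∀ v, 1 ≤ w v) :
    HasInducedCopy G H ↔ HasInducedCopy (blowup G w) H := by
  constructor
  · rintro ⟨S, ⟨e⟩⟩
    set f : V → (v : V) × Fin (w v) := fun v => ⟨v, ⟨0, hw v⟩⟩ with hf
    have hfinj : Function.Injective f := fun a b h => congrArg Sigma.fst h
    refine ⟨f '' S, ⟨RelIso.trans (RelIso.symm
      (⟨Equiv.Set.imageOfInjOn f S hfinj.injOn, ?_⟩ :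
        G.induce S ≃g (blowup G w).induce (f '' S))) e⟩⟩
    intro a b
    show (blowup G w).Adj (f a.1) (f b.1) ↔ G.Adj a.1 b.1
    constructor
    · rintro ⟨hne, h | h⟩
      · exact absurd (congrArg f h) hne
      · exact h
    · intro h
      exact ⟨fun heq => G.ne_of_adj h (congrArg Sigma.fst heq), Or.inr h⟩
  · rintro ⟨S, ⟨e⟩⟩
    have key : ∀ (x y : (v : V) × Fin (w v)), x ≠ y → x.1 = y.1 →
        ∀ c, (c = x ∨ (blowup G w).Adj x c) → (c = y ∨ (blowup G w).Adj y c) := by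
      rintro x y hne hxy c (rfl | ⟨hxc, hor⟩)
      · exact Or.inr ⟨Ne.symm hne, Or.inl hxy.symm⟩
      · by_cases hcy : c = y
        · exact Or.inl hcy
        · exact Or.inr ⟨Ne.symm hcy, by rw [← hxy]; exact hor⟩
    have hinj : Set.InjOn Sigma.fst S := by
      intro x hx y hy hxy
      by_contra hne
      apply hH (e ⟨x, hx⟩) (e ⟨y, hy⟩)
      constructor
      · intro h
        exact hne (congrArg Subtype.val (e.injective h))
      · ext z
        obtain ⟨z', rfl⟩ := e.surjective z
        simp only [Set.mem_insert_iff, SimpleGraph.mem_neighborSet, e.map_adj_iff,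
          EmbeddingLike.apply_eq_iff_eq, Subtype.ext_iff, SimpleGraph.comap_adj,
          Function.Embedding.coe_subtype]
        constructor
        · exact key x y hne hxy z'.1
        · exact key y x (Ne.symm hne) hxy.symm z'.1
    refine ⟨Sigma.fst '' S, ⟨RelIso.trans (RelIso.symm
      (⟨Equiv.Set.imageOfInjOn Sigma.fst S hinj, ?_⟩ :
        (blowup G w).induce S ≃g G.induce (Sigma.fst '' S))) e⟩⟩
    intro a b
    show G.Adj a.1.1 b.1.1 ↔ (blowup G w).Adj a.1 b.1
    constructor
    · intro h
      exact ⟨fun heq => G.ne_of_adj h (congrArg Sigma.fst heq), Or.inr h⟩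
    · rintro ⟨hne, h | h⟩
      · exact absurd (hinj a.2 b.2 h) (fun hab => hne hab)
      · exact h
end

section
/- Let G be a connected bipartite fast finite simple graph and let w be a vertex of G. Then the induced subgraph of G on V(G) ∖ N(w), where N(w) is the open neighbourhood of w (so w itself is kept), contains no induced cycle of length at least 5. -/
open SimpleGraph
open Fin.NatCast
open Fin.CommRing

/-- The armchair: a 4-cycle 0-1-2-3 with pendant vertices 4, 5, 6 attached to 0, 1, 2. -/
def armchair : SimpleGraph (Fin 7) :=
  SimpleGraph.fromRel (fun a b =>
    (a = 0 ∧ b = 1) ∨ (a = 1 ∧ b = 2) ∨ (a = 2 ∧ b = 3) ∨ (a = 3 ∧ b = 0) ∨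
    (a = 0 ∧ b = 4) ∨ (a = 1 ∧ b = 5) ∨ (a = 2 ∧ b = 6))

/-- The stirrer: two 4-cycles 0-1-2-3 and 0-1-4-5 sharing exactly the edge 0-1,
with a pendant vertex 6 attached to the endpoint 0 of the shared edge. -/
def stirrer : SimpleGraph (Fin 7) :=
  SimpleGraph.fromRel (fun a b =>
    (a = 0 ∧ b = 1) ∨ (a = 1 ∧ b = 2) ∨ (a = 2 ∧ b = 3) ∨ (a = 3 ∧ b = 0) ∨
    (a = 1 ∧ b = 4) ∨ (a = 4 ∧ b = 5) ∨ (a = 5 ∧ b = 0) ∨ (a = 0 ∧ b = 6))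

/-- The tripod: the star K_{1,3} with each edge subdivided once
(centre 0 with paths 0-1-2, 0-3-4, 0-5-6). -/
def tripod : SimpleGraph (Fin 7) :=
  SimpleGraph.fromRel (fun a b =>
    (a = 0 ∧ b = 1) ∨ (a = 1 ∧ b = 2) ∨ (a = 0 ∧ b = 3) ∨ (a = 3 ∧ b = 4) ∨
    (a = 0 ∧ b = 5) ∨ (a = 5 ∧ b = 6))

/-- A graph is fast if it contains no induced armchair, stirrer or tripod. -/
def Fast {V : Type*} (G : SimpleGraph V) : Prop :=
  ¬ HasInducedCopy G armchair ∧ ¬ HasInducedCopy G stirrer ∧ ¬ HasInducedCopy G tripod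

/-- A graph is hole-free if it contains no induced cycle of length at least 5. -/
def HoleFree {V : Type*} (G : SimpleGraph V) : Prop :=
  ∀ n : ℕ, 5 ≤ n → ¬ HasInducedCopy G (SimpleGraph.cycleGraph n)

section Helpers

variable {V : Type*} {G : SimpleGraph V}

lemma hasInducedCopy_of_map {V W : Type*} (G : SimpleGraph V) (H : SimpleGraph W)
    (f : W → V) (hinj : Function.Injective f)
    (hiff : ∀ a b, G.Adj (f a) (f b) ↔ H.Adj a b) : HasInducedCopy G H := by
  refine ⟨Set.range f, ⟨SimpleGraph.Iso.symm ⟨Equiv.ofInjective f hinj, ?_⟩⟩⟩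
  intro a b
  simp only [comap_adj, Function.Embedding.coe_subtype, Equiv.ofInjective_apply]
  exact hiff a b

lemma exists_walk_getVert {u v : V} (p : G.Walk u v) (k : ℕ) :
    ∃ q : G.Walk u (p.getVert k), q.length ≤ k := by
  induction p generalizing k with
  | nil => exact ⟨SimpleGraph.Walk.nil, by simp⟩
  | @cons a b c h q ih =>
    cases k with
    | zero => exact ⟨SimpleGraph.Walk.nil, by simp; rfl⟩
    | succ k =>
      obtain ⟨r, hr⟩ := ih k
      exact ⟨SimpleGraph.Walk.cons h r, by simp; omega⟩

lemma dist_getVert_le {u v : V} (p : G.Walk u v) (k : ℕ) :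
    G.dist u (p.getVert k) ≤ k := by
  obtain ⟨q, hq⟩ := exists_walk_getVert p k
  exact le_trans (SimpleGraph.dist_le q) hq

/-- Bipartite graphs are triangle-free. -/
lemma bip_no_triangle (hbip : IsBipartiteGraph G) {a b c : V}
    (hab : G.Adj a b) (hbc : G.Adj b c) : ¬ G.Adj a c := by
  obtain ⟨A, B, hU, -, hA, hB⟩ := hbip
  have mem : ∀ v : V, v ∈ A ∨ v ∈ B := by
    intro v
    have : v ∈ A ∪ B := hU.symm ▸ Set.mem_univ v
    exact this
  intro hac
  rcases mem a with ha | ha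
  · have hb : b ∈ B := (mem b).resolve_left fun hb => hA ha hb hab
    have hc : c ∈ A := (mem c).resolve_right fun hc => hB hb hc hbc
    exact hA ha hc hac
  · have hb : b ∈ A := (mem b).resolve_right fun hb => hB ha hb hab
    have hc : c ∈ B := (mem c).resolve_left fun hc => hA hb hc hbc
    exact hB ha hc hac

lemma armchair_of (G : SimpleGraph V) (v0 v1 v2 v3 v4 v5 v6 : V)
    (e01 : G.Adj v0 v1) (e12 : G.Adj v1 v2) (e23 : G.Adj v2 v3) (e30 : G.Adj v3 v0)
    (e04 : G.Adj v0 v4) (e15 : G.Adj v1 v5) (e26 : G.Adj v2 v6)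
    (n02 : ¬G.Adj v0 v2) (n05 : ¬G.Adj v0 v5) (n06 : ¬G.Adj v0 v6)
    (n13 : ¬G.Adj v1 v3) (n14 : ¬G.Adj v1 v4) (n16 : ¬G.Adj v1 v6)
    (n24 : ¬G.Adj v2 v4) (n25 : ¬G.Adj v2 v5) (n34 : ¬G.Adj v3 v4)
    (n35 : ¬G.Adj v3 v5) (n36 : ¬G.Adj v3 v6) (n45 : ¬G.Adj v4 v5)
    (n46 : ¬G.Adj v4 v6) (n56 : ¬G.Adj v5 v6)
    (d02 : v0 ≠ v2) (d05 : v0 ≠ v5) (d06 : v0 ≠ v6)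
    (d13 : v1 ≠ v3) (d14 : v1 ≠ v4) (d16 : v1 ≠ v6)
    (d24 : v2 ≠ v4) (d25 : v2 ≠ v5) (d34 : v3 ≠ v4)
    (d35 : v3 ≠ v5) (d36 : v3 ≠ v6) (d45 : v4 ≠ v5)
    (d46 : v4 ≠ v6) (d56 : v5 ≠ v6) :
    HasInducedCopy G armchair := by
  have h01 := e01.ne; have h12 := e12.ne; have h23 := e23.ne; have h30 := e30.ne
  have h04 := e04.ne; have h15 := e15.ne; have h26 := e26.ne
  apply hasInducedCopy_of_map G armchair ![v0, v1, v2, v3, v4, v5, v6]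
  · intro a b h
    fin_cases a <;> fin_cases b <;>
      first
        | rfl
        | (exact absurd h (by assumption))
        | (exact absurd h.symm (by assumption))
  · intro a b
    fin_cases a <;> fin_cases b <;>
      first
        | (refine iff_of_true ?_ (by simp only [armchair, SimpleGraph.fromRel_adj]; decide);
           first | assumption | exact (by assumption : G.Adj _ _).symm)
        | (refine iff_of_false ?_ (by simp only [armchair, SimpleGraph.fromRel_adj]; decide);
           first
             | assumption
             | exact fun hh => (by assumption : ¬ G.Adj _ _) hh.symm
             | exact G.irrefl)

lemma tripod_of (G : SimpleGraph V) (v0 v1 v2 v3 v4 v5 v6 : V)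
    (e01 : G.Adj v0 v1) (e12 : G.Adj v1 v2) (e03 : G.Adj v0 v3) (e34 : G.Adj v3 v4)
    (e05 : G.Adj v0 v5) (e56 : G.Adj v5 v6)
    (n02 : ¬G.Adj v0 v2) (n04 : ¬G.Adj v0 v4) (n06 : ¬G.Adj v0 v6)
    (n13 : ¬G.Adj v1 v3) (n14 : ¬G.Adj v1 v4) (n15 : ¬G.Adj v1 v5)
    (n16 : ¬G.Adj v1 v6) (n23 : ¬G.Adj v2 v3) (n24 : ¬G.Adj v2 v4)
    (n25 : ¬G.Adj v2 v5) (n26 : ¬G.Adj v2 v6) (n35 : ¬G.Adj v3 v5)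
    (n36 : ¬G.Adj v3 v6) (n45 : ¬G.Adj v4 v5) (n46 : ¬G.Adj v4 v6)
    (d02 : v0 ≠ v2) (d04 : v0 ≠ v4) (d06 : v0 ≠ v6)
    (d13 : v1 ≠ v3) (d14 : v1 ≠ v4) (d15 : v1 ≠ v5)
    (d16 : v1 ≠ v6) (d23 : v2 ≠ v3) (d24 : v2 ≠ v4)
    (d25 : v2 ≠ v5) (d26 : v2 ≠ v6) (d35 : v3 ≠ v5)
    (d36 : v3 ≠ v6) (d45 : v4 ≠ v5) (d46 : v4 ≠ v6) :
    HasInducedCopy G tripod := by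
  have h01 := e01.ne; have h12 := e12.ne; have h03 := e03.ne; have h34 := e34.ne
  have h05 := e05.ne; have h56 := e56.ne
  apply hasInducedCopy_of_map G tripod ![v0, v1, v2, v3, v4, v5, v6]
  · intro a b h
    fin_cases a <;> fin_cases b <;>
      first
        | rfl
        | (exact absurd h (by assumption))
        | (exact absurd h.symm (by assumption))
  · intro a b
    fin_cases a <;> fin_cases b <;>
      first
        | (refine iff_of_true ?_ (by simp only [tripod, SimpleGraph.fromRel_adj]; decide);
           first | assumption | exact (by assumption : G.Adj _ _).symm)
        | (refine iff_of_false ?_ (by simp only [tripod, SimpleGraph.fromRel_adj]; decide);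
           first
             | assumption
             | exact fun hh => (by assumption : ¬ G.Adj _ _) hh.symm
             | exact G.irrefl)

end Helpers

/-- For a connected bipartite fast finite simple graph `G` and a vertex `w`,
the induced subgraph on `V ∖ N(w)` (keeping `w` itself) is hole-free. -/
theorem fast_delete_neighborhood_holeFree {V : Type*} [Fintype V] (G : SimpleGraph V)
    (hconn : G.Connected) (hbip : IsBipartiteGraph G) (hfast : Fast G) (w : V) :
    HoleFree (G.induce {v : V | v ∉ G.neighborSet w}) := by
  intro n hn hcopy
  obtain ⟨S, ⟨e⟩⟩ := hcopy
  haveI : NeZero n := ⟨by omega⟩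
  -- the cycle vertices as elements of V
  obtain ⟨c, hcinj, hmem, hAdjIff⟩ : ∃ c : Fin n → V, Function.Injective c ∧
      (∀ i, ¬ G.Adj w (c i)) ∧
      (∀ a b, G.Adj (c a) (c b) ↔ (cycleGraph n).Adj a b) := by
    refine ⟨fun i => ((e.symm i : S) : {v : V | v ∉ G.neighborSet w}), ?_, ?_, ?_⟩
    · intro i j h
      apply e.symm.injective
      exact Subtype.coe_injective (Subtype.coe_injective h)
    · intro i
      exact ((e.symm i : S) : {v : V | v ∉ G.neighborSet w}).2
    · intro a b
      have h := e.symm.map_adj_iff (v := a) (w := b)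
      simpa [comap_adj] using h
  -- basic cycle facts
  have hvalcast : ∀ m : ℕ, m < n → ((m : Fin n)).val = m := by
    intro m hm
    rw [Fin.val_natCast]
    exact Nat.mod_eq_of_lt hm
  have hadj1 : ∀ i : Fin n, G.Adj (c i) (c (i + 1)) := by
    intro i
    rw [hAdjIff, cycleGraph_adj']
    right
    rw [add_sub_cancel_left, ← Nat.cast_one, hvalcast 1 (by omega)]
  have hnadjk : ∀ (i : Fin n) (m : ℕ), 2 ≤ m → m + 2 ≤ n →
      ¬ G.Adj (c i) (c (i + (m : Fin n))) := by
    intro i m hm2 hmn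
    rw [hAdjIff, cycleGraph_adj']
    push_neg
    have h1 : ((i + (m : Fin n)) - i) = (m : Fin n) := by ring
    have h2 : (i - (i + (m : Fin n))) = ((n - m : ℕ) : Fin n) := by
      have : ((m : Fin n)) + ((n - m : ℕ) : Fin n) = 0 := by
        rw [← Nat.cast_add, show m + (n - m) = n by omega, Fin.natCast_self]
      have h3 : ((n - m : ℕ) : Fin n) = -(m : Fin n) := by
        rw [← neg_eq_of_add_eq_zero_right this]
      rw [h3]; ring
    constructor
    · rw [h2, hvalcast (n - m) (by omega)]; omega
    · rw [h1, hvalcast m (by omega)]; omega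
  have hnek : ∀ (i : Fin n) (m : ℕ), 1 ≤ m → m < n → c i ≠ c (i + (m : Fin n)) := by
    intro i m hm1 hmn h
    have := hcinj h
    have h0 : (m : Fin n) = 0 := by
      have := left_eq_add.mp this
      exact this
    rw [Fin.natCast_eq_zero] at h0
    have := Nat.le_of_dvd (by omega) h0
    omega
  -- dispose of the pentagon case using bipartiteness
  rcases Nat.lt_or_ge n 6 with h5 | h6
  · have hn5 : n = 5 := by omega
    subst hn5
    obtain ⟨A, B, hU, -, hA, hB⟩ := hbip
    have mem : ∀ v : V, v ∈ A ∨ v ∈ B := fun v => (hU.symm ▸ Set.mem_univ v : v ∈ A ∪ B)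
    have stepA : ∀ u v : V, G.Adj u v → u ∈ A → v ∈ B :=
      fun u v h hu => (mem v).resolve_left fun hv => hA hu hv h
    have stepB : ∀ u v : V, G.Adj u v → u ∈ B → v ∈ A :=
      fun u v h hu => (mem v).resolve_right fun hv => hB hu hv h
    have h01 := hadj1 0
    have h12 := hadj1 1
    have h23 := hadj1 2
    have h34 := hadj1 3
    have h40 : G.Adj (c 4) (c 0) := by
      rw [hAdjIff, cycleGraph_adj']
      right; rfl
    rcases mem (c 0) with h0 | h0
    · have h1 := stepA _ _ h01 h0
      have h2 := stepB _ _ h12 h1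
      have h3 := stepA _ _ h23 h2
      have h4 := stepB _ _ h34 h3
      exact hA h4 h0 h40
    · have h1 := stepB _ _ h01 h0
      have h2 := stepA _ _ h12 h1
      have h3 := stepB _ _ h23 h2
      have h4 := stepA _ _ h34 h3
      exact hB h4 h0 h40
  -- main case: n ≥ 6
  haveI : Nonempty (Fin n) := ⟨⟨0, by omega⟩⟩
  obtain ⟨i₀, hi₀⟩ := Finite.exists_min (fun i : Fin n => G.dist w (c i))
  set d := G.dist w (c i₀) with hd
  obtain ⟨p, hp⟩ := (hconn w (c i₀)).exists_walk_length_eq_dist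
  have hd0 : d ≠ 0 := by
    intro h
    have hw : w = c i₀ := (hconn.dist_eq_zero_iff).mp h
    exact hmem (i₀ + 1) (hw ▸ hadj1 i₀)
  have hd1 : d ≠ 1 := by
    intro h
    have : G.Adj (p.getVert 0) (p.getVert 1) :=
      p.adj_getVert_succ (by omega)
    rw [p.getVert_zero, show (1 : ℕ) = p.length by omega, p.getVert_length] at this
    exact hmem i₀ this
  have hd2 : 2 ≤ d := by omega
  set x := p.getVert (d - 1) with hx
  set y := p.getVert (d - 2) with hy
  have hdx : G.dist w x ≤ d - 1 := dist_getVert_le p (d - 1)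
  have hdy : G.dist w y ≤ d - 2 := dist_getVert_le p (d - 2)
  have hxc : G.Adj x (c i₀) := by
    have : G.Adj (p.getVert (d - 1)) (p.getVert (d - 1 + 1)) :=
      p.adj_getVert_succ (by omega)
    rw [show d - 1 + 1 = d by omega] at this
    rwa [show p.getVert d = c i₀ from by
      rw [show d = p.length by omega, p.getVert_length]] at this
  have hyx : G.Adj y x := by
    have : G.Adj (p.getVert (d - 2)) (p.getVert (d - 2 + 1)) :=
      p.adj_getVert_succ (by omega)
    rwa [show d - 2 + 1 = d - 1 by omega] at this
  have hxne : ∀ j : Fin n, x ≠ c j := by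
    intro j h
    have := hi₀ j
    rw [← h] at this
    omega
  have hyne : ∀ j : Fin n, y ≠ c j := by
    intro j h
    have := hi₀ j
    rw [← h] at this
    omega
  have hynadj : ∀ j : Fin n, ¬ G.Adj y (c j) := by
    intro j h
    have ht : G.dist w (c j) ≤ G.dist w y + G.dist y (c j) := hconn.dist_triangle
    have h1 : G.dist y (c j) ≤ 1 := by
      have := SimpleGraph.dist_le h.toWalk
      simpa using this
    have := hi₀ j
    omega
  -- triangle-freeness
  have tfree : ∀ a b cc : V, G.Adj a b → G.Adj b cc → ¬ G.Adj a cc :=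
    fun a b cc hab hbc => bip_no_triangle hbip hab hbc
  -- case split
  by_cases hcase : ∃ i : Fin n, G.Adj x (c i) ∧ G.Adj x (c (i + ((2 : ℕ) : Fin n)))
  · -- armchair case
    obtain ⟨i, hx1', hx3'⟩ := hcase
    set j : Fin n := i - 1 with hj
    set C : ℕ → V := fun k => c (j + (k : Fin n)) with hC
    have hCadj : ∀ k : ℕ, G.Adj (C k) (C (k + 1)) := by
      intro k
      have : (j + ((k + 1 : ℕ) : Fin n)) = (j + (k : Fin n)) + 1 := by push_cast; ring
      rw [hC]; dsimp only; rw [this]; exact hadj1 _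
    have hCnadj : ∀ (k m : ℕ), 2 ≤ m → m + 2 ≤ n → ¬ G.Adj (C k) (C (k + m)) := by
      intro k m hm2 hmn
      have : (j + ((k + m : ℕ) : Fin n)) = (j + (k : Fin n)) + (m : Fin n) := by
        push_cast; ring
      rw [hC]; dsimp only; rw [this]; exact hnadjk _ m hm2 hmn
    have hCne : ∀ (k m : ℕ), 1 ≤ m → m < n → C k ≠ C (k + m) := by
      intro k m hm1 hmn
      have : (j + ((k + m : ℕ) : Fin n)) = (j + (k : Fin n)) + (m : Fin n) := by
        push_cast; ring
      rw [hC]; dsimp only; rw [this]; exact hnek _ m hm1 hmn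
    have hx1 : G.Adj x (C 1) := by
      have : j + ((1 : ℕ) : Fin n) = i := by rw [hj]; push_cast; ring
      rw [hC]; dsimp only; rw [this]; exact hx1'
    have hx3 : G.Adj x (C 3) := by
      have : j + ((3 : ℕ) : Fin n) = i + ((2 : ℕ) : Fin n) := by rw [hj]; push_cast; ring
      rw [hC]; dsimp only; rw [this]; exact hx3'
    have hxneC : ∀ k : ℕ, x ≠ C k := fun k => hxne _
    have hyneC : ∀ k : ℕ, y ≠ C k := fun k => hyne _
    have hynadjC : ∀ k : ℕ, ¬ G.Adj y (C k) := fun k => hynadj _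
    exact absurd
      (armchair_of G (C 1) x (C 3) (C 2) (C 0) y (C 4)
        hx1.symm hx3 ((hCadj 2).symm) ((hCadj 1).symm) ((hCadj 0).symm) hyx.symm (hCadj 3)
        (hCnadj 1 2 (by omega) (by omega))
        (fun h => hynadjC 1 h.symm)
        (hCnadj 1 3 (by omega) (by omega))
        (tfree x (C 1) (C 2) hx1 (hCadj 1))
        (tfree x (C 1) (C 0) hx1 ((hCadj 0).symm))
        (tfree x (C 3) (C 4) hx3 (hCadj 3))
        (fun h => (hCnadj 0 3 (by omega) (by omega)) h.symm)
        (fun h => hynadjC 3 h.symm)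
        (fun h => (hCnadj 0 2 (by omega) (by omega)) h.symm)
        (fun h => hynadjC 2 h.symm)
        (hCnadj 2 2 (by omega) (by omega))
        (fun h => hynadjC 0 h.symm)
        (hCnadj 0 4 (by omega) (by omega))
        (hynadjC 4)
        (hCne 1 2 (by omega) (by omega))
        ((hyneC 1).symm)
        (hCne 1 3 (by omega) (by omega))
        (hxneC 2) (hxneC 0) (hxneC 4)
        ((hCne 0 3 (by omega) (by omega)).symm)
        ((hyneC 3).symm)
        ((hCne 0 2 (by omega) (by omega)).symm)
        ((hyneC 2).symm)
        (hCne 2 2 (by omega) (by omega))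
        ((hyneC 0).symm)
        (hCne 0 4 (by omega) (by omega))
        (hyneC 4).symm.symm)
      hfast.1
  · -- tripod case
    push_neg at hcase
    set j : Fin n := i₀ - ((2 : ℕ) : Fin n) with hj
    set C : ℕ → V := fun k => c (j + (k : Fin n)) with hC
    have hCadj : ∀ k : ℕ, G.Adj (C k) (C (k + 1)) := by
      intro k
      have : (j + ((k + 1 : ℕ) : Fin n)) = (j + (k : Fin n)) + 1 := by push_cast; ring
      rw [hC]; dsimp only; rw [this]; exact hadj1 _
    have hCnadj : ∀ (k m : ℕ), 2 ≤ m → m + 2 ≤ n → ¬ G.Adj (C k) (C (k + m)) := by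
      intro k m hm2 hmn
      have : (j + ((k + m : ℕ) : Fin n)) = (j + (k : Fin n)) + (m : Fin n) := by
        push_cast; ring
      rw [hC]; dsimp only; rw [this]; exact hnadjk _ m hm2 hmn
    have hCne : ∀ (k m : ℕ), 1 ≤ m → m < n → C k ≠ C (k + m) := by
      intro k m hm1 hmn
      have : (j + ((k + m : ℕ) : Fin n)) = (j + (k : Fin n)) + (m : Fin n) := by
        push_cast; ring
      rw [hC]; dsimp only; rw [this]; exact hnek _ m hm1 hmn
    have hj2 : j + ((2 : ℕ) : Fin n) = i₀ := by rw [hj]; ring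
    have hx2 : G.Adj x (C 2) := by
      rw [hC]; dsimp only; rw [hj2]; exact hxc
    have hnx0 : ¬ G.Adj x (C 0) := by
      intro h
      apply hcase j
      · rw [hC] at h; dsimp only at h
        rwa [show j + ((0:ℕ) : Fin n) = j by push_cast; ring] at h
      · rwa [hj2]
    have hnx4 : ¬ G.Adj x (C 4) := by
      intro h
      apply hcase i₀
      · exact hxc
      · rw [hC] at h; dsimp only at h
        rwa [show j + ((4:ℕ) : Fin n) = i₀ + ((2:ℕ) : Fin n) by
          rw [← hj2]; push_cast; ring] at h
    have hxneC : ∀ k : ℕ, x ≠ C k := fun k => hxne _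
    have hyneC : ∀ k : ℕ, y ≠ C k := fun k => hyne _
    have hynadjC : ∀ k : ℕ, ¬ G.Adj y (C k) := fun k => hynadj _
    exact absurd
      (tripod_of G (C 2) (C 1) (C 0) (C 3) (C 4) x y
        ((hCadj 1).symm) ((hCadj 0).symm) (hCadj 2) (hCadj 3) hx2.symm hyx.symm
        (fun h => (hCnadj 0 2 (by omega) (by omega)) h.symm)
        (hCnadj 2 2 (by omega) (by omega))
        (fun h => hynadjC 2 h.symm)
        (hCnadj 1 2 (by omega) (by omega))
        (hCnadj 1 3 (by omega) (by omega))
        (fun h => (tfree x (C 2) (C 1) hx2 ((hCadj 1).symm)) h.symm)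
        (fun h => hynadjC 1 h.symm)
        (fun h => (hCnadj 0 3 (by omega) (by omega)) h)
        (hCnadj 0 4 (by omega) (by omega))
        (fun h => hnx0 h.symm)
        (fun h => hynadjC 0 h.symm)
        (fun h => (tfree x (C 2) (C 3) hx2 (hCadj 2)) h.symm)
        (fun h => hynadjC 3 h.symm)
        (fun h => hnx4 h.symm)
        (fun h => hynadjC 4 h.symm)
        ((hCne 0 2 (by omega) (by omega)).symm)
        (hCne 2 2 (by omega) (by omega))
        ((hyneC 2).symm)
        (hCne 1 2 (by omega) (by omega))
        (hCne 1 3 (by omega) (by omega))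
        ((hxneC 1).symm)
        ((hyneC 1).symm)
        (hCne 0 3 (by omega) (by omega))
        (hCne 0 4 (by omega) (by omega))
        ((hxneC 0).symm)
        ((hyneC 0).symm)
        ((hxneC 3).symm)
        ((hyneC 3).symm)
        ((hxneC 4).symm)
        ((hyneC 4).symm))
      hfast.2.2
end
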